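/- Let θ₀ be a nonconstant singular inner function and let ω be the singular inner function with ω² = θ₀ (associated to half the singular measure). Set α := conj(ω(0)), so 0 < |α| < 1. Then ω − 1/α belongs to H^2 ⊖ θ₀H^2, and ω − 1/α is an outer function invertible in H^∞. -/

import Mathlib

open MeasureTheory Complex Submodule
noncomputable section
instance fact2pi : Fact (0 < 2 * Real.pi) := ⟨by positivity⟩
instance factTop1 : Fact ((1:ENNReal) ≤ (⊤:ENNReal)) := ⟨le_top⟩
/-- the circle group -/
abbrev Tc := AddCircle (2 * Real.pi)
/-- normalized Haar measure on the circle -/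
abbrev muh : Measure Tc := AddCircle.haarAddCircle
/-- L² of the circle -/
abbrev L2 := Lp ℂ 2 muh
/-- L^∞ of the circle -/
abbrev Linf := Lp ℂ ⊤ muh

/-- The Hardy space `H²` as a closed subspace of `L²` of the circle. -/
def H2 : Submodule ℂ L2 :=
  (span ℂ (Set.range fun n : ℕ => (fourierLp 2 (n : ℤ) : L2))).topologicalClosure

theorem isClosed_H2 : IsClosed (H2 : Set L2) := Submodule.isClosed_topologicalClosure _
instance : CompleteSpace H2 := IsClosed.completeSpace_coe (hs := isClosed_H2)

theorem memLp2_mul (φ : Linf) (g : L2) :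
    MemLp ((φ : Tc → ℂ) • (g : Tc → ℂ)) 2 muh :=
  MemLp.smul (Lp.memLp g) (Lp.memLp φ)

/-- multiplication of an `L∞` function and an `L²` function, as an element of `L²`. -/
def mulL2 (φ : Linf) (g : L2) : L2 := (memLp2_mul φ g).toLp _

theorem mulL2_add (φ : Linf) (g h : L2) : mulL2 φ (g + h) = mulL2 φ g + mulL2 φ h := by
  simp only [mulL2]
  rw [← MemLp.toLp_add]
  apply MemLp.toLp_congr
  filter_upwards [Lp.coeFn_add g h] with x hx
  simp only [Pi.mul_apply, Pi.smul_apply, smul_eq_mul, hx, Pi.add_apply]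
  ring

theorem mulL2_smul (φ : Linf) (c : ℂ) (g : L2) : mulL2 φ (c • g) = c • mulL2 φ g := by
  simp only [mulL2]
  rw [← MemLp.toLp_const_smul]
  apply MemLp.toLp_congr
  filter_upwards [Lp.coeFn_smul c g] with x hx
  simp only [Pi.mul_apply, Pi.smul_apply, smul_eq_mul, hx]
  ring

theorem mulL2_norm (φ : Linf) (g : L2) : ‖mulL2 φ g‖ ≤ ‖φ‖ * ‖g‖ := by
  rw [mulL2, Lp.norm_toLp]
  have h : eLpNorm ((φ : Tc → ℂ) • (g : Tc → ℂ)) 2 muh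
      ≤ eLpNorm (φ : Tc → ℂ) ⊤ muh * eLpNorm (g : Tc → ℂ) 2 muh :=
    eLpNorm_smul_le_mul_eLpNorm (Lp.aestronglyMeasurable g) (Lp.aestronglyMeasurable φ)
  calc (eLpNorm ((φ : Tc → ℂ) • (g : Tc → ℂ)) 2 muh).toReal
      ≤ (eLpNorm (φ : Tc → ℂ) ⊤ muh * eLpNorm (g : Tc → ℂ) 2 muh).toReal := by
        apply ENNReal.toReal_mono
        · exact ENNReal.mul_ne_top (Lp.eLpNorm_ne_top φ) (Lp.eLpNorm_ne_top g)
        · exact h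
    _ = ‖φ‖ * ‖g‖ := by
        rw [ENNReal.toReal_mul, Lp.norm_def, Lp.norm_def]

/-- Multiplication by an `L^∞` function as a continuous linear operator on `L²`. -/
def Mmul (φ : Linf) : L2 →L[ℂ] L2 :=
  LinearMap.mkContinuous
    { toFun := mulL2 φ
      map_add' := mulL2_add φ
      map_smul' := mulL2_smul φ } ‖φ‖ (mulL2_norm φ)

/-- the orthogonal projection `P : L² → H²`. -/
abbrev P2 : L2 →L[ℂ] ↥H2 := orthogonalProjection H2

/-- The Toeplitz operator with symbol `φ ∈ L^∞`, acting on `H²`: `T_φ g = P (φ g)`. -/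
def Toep (φ : Linf) : ↥H2 →L[ℂ] ↥H2 := P2 ∘L (Mmul φ) ∘L H2.subtypeL

/-- The Toeplitz operator, viewed as a map `L² → L²` (useful to avoid coercions). -/
def TopL (φ : Linf) : L2 →L[ℂ] L2 := H2.subtypeL ∘L P2 ∘L Mmul φ

theorem memLpTop_mul (φ ψ : Linf) : MemLp ((φ : Tc → ℂ) • (ψ : Tc → ℂ)) ⊤ muh :=
  MemLp.smul (Lp.memLp ψ) (Lp.memLp φ)

/-- `L^∞` is closed under products; we register this as a `Mul` instance. -/
instance : Mul Linf := ⟨fun φ ψ => (memLpTop_mul φ ψ).toLp _⟩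

/-- the constant function `1` in `L^∞`. -/
instance : One Linf := ⟨(memLp_top_const (1 : ℂ)).toLp _⟩

/-- the embedding of `L^∞` into `L²` (the measure is finite). -/
def toL2 (φ : Linf) : L2 := ((Lp.memLp φ).mono_exponent le_top).toLp _

/-- `H^∞`: the essentially bounded functions lying in the Hardy space. -/
def Hinf : Set Linf := {φ | toL2 φ ∈ H2}

/-- pointwise complex conjugation on `L²`. -/
def conjL2 (f : L2) : L2 :=
  ((Complex.conjCLE.toContinuousLinearMap).comp_memLp' (Lp.memLp f)).toLp _

/-- pointwise complex conjugation on `L^∞`. -/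
def conjLinf (φ : Linf) : Linf :=
  ((Complex.conjCLE.toContinuousLinearMap).comp_memLp' (Lp.memLp φ)).toLp _

/-- composition with `z ↦ z⁻¹` (i.e. `x ↦ -x` on the additive circle) on `L²`. -/
def compNegL2 : L2 →ₗᵢ[ℂ] L2 :=
  Lp.compMeasurePreservingₗᵢ ℂ (fun x : Tc => -x) (Measure.measurePreserving_neg muh)

/-- composition with `z ↦ z⁻¹` on `L^∞`. -/
def compNegLinf (φ : Linf) : Linf :=
  Lp.compMeasurePreserving (fun x : Tc => -x) (Measure.measurePreserving_neg muh) φ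

/-- `φ̃(z) = conj (φ (z̄))`. -/
def tildeL (φ : Linf) : Linf := conjLinf (compNegLinf φ)

/-- `f̃(z) = conj (f (z̄))` on `L²`. -/
def tilde2 (f : L2) : L2 := conjL2 (compNegL2 f)

/-- the unitary `J` on `L²`: `(J f)(z) = z̄ f(z̄)`. -/
def Jop : L2 →L[ℂ] L2 := (Mmul (fourierLp ⊤ (-1))) ∘L compNegL2.toContinuousLinearMap

/-- the projection onto `(H²)^⊥`. -/
def PperpL : L2 →L[ℂ] L2 := ContinuousLinearMap.id ℂ L2 - H2.subtypeL ∘L P2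

/-- The Hankel operator with symbol `φ`: `H_φ g = J P^⊥ (φ g)`. -/
def Hank (φ : Linf) : ↥H2 →L[ℂ] L2 := Jop ∘L PperpL ∘L (Mmul φ) ∘L H2.subtypeL

/-- the self-commutator `[T^*, T] = T^*T - TT^*`. -/
def selfCommOp {H : Type*} [NormedAddCommGroup H] [InnerProductSpace ℂ H] [CompleteSpace H]
    (T : H →L[ℂ] H) : H →L[ℂ] H :=
  ContinuousLinearMap.adjoint T ∘L T - T ∘L ContinuousLinearMap.adjoint T

/-- hyponormality of a Hilbert-space operator. -/
def IsHyponormalOp {H : Type*} [NormedAddCommGroup H] [InnerProductSpace ℂ H] [CompleteSpace H]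
    (T : H →L[ℂ] H) : Prop := (selfCommOp T).IsPositive

/-- normality of a Hilbert-space operator. -/
def IsNormalOp {H : Type*} [NormedAddCommGroup H] [InnerProductSpace ℂ H] [CompleteSpace H]
    (T : H →L[ℂ] H) : Prop := selfCommOp T = 0

/-- finite rank operator. -/
def FiniteRankOp {H : Type*} [NormedAddCommGroup H] [InnerProductSpace ℂ H]
    (T : H →L[ℂ] H) : Prop := FiniteDimensional ℂ ↥(LinearMap.range (T : H →ₗ[ℂ] H))

/-- `φ` is of bounded type: a quotient of two `H^∞` functions. -/
def BoundedType (φ : Linf) : Prop :=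
  ∃ ψ₁ ψ₂ : Linf, ψ₁ ∈ Hinf ∧ ψ₂ ∈ Hinf ∧ (∀ᵐ x ∂muh, (ψ₂ : Tc → ℂ) x ≠ 0) ∧
    (∀ᵐ x ∂muh, (φ : Tc → ℂ) x = (ψ₁ : Tc → ℂ) x / (ψ₂ : Tc → ℂ) x)

/-- scalar inner function. -/
def IsInner (θ : Linf) : Prop := θ ∈ Hinf ∧ ∀ᵐ x ∂muh, ‖(θ : Tc → ℂ) x‖ = 1

/-- constant function in `L^∞`. -/
def IsConstLinf (θ : Linf) : Prop := ∃ c : ℂ, θ = c • (1 : Linf)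

/-- the boundary function `z = e^{ix}` on the circle. -/
def zfun : Tc → ℂ := fun x => fourier 1 x

/-- finite Blaschke product. -/
def IsFiniteBlaschke (θ : Linf) : Prop :=
  ∃ (c : ℂ) (N : ℕ) (α : Fin N → ℂ), ‖c‖ = 1 ∧ (∀ i, ‖α i‖ < 1) ∧
    ∀ᵐ x ∂muh, (θ : Tc → ℂ) x =
      c * ∏ i, (zfun x - α i) / (1 - (starRingEnd ℂ (α i)) * zfun x)

/-- divisibility of inner functions: `θ` divides `θ'`. -/
def InnerDivides (θ θ' : Linf) : Prop := ∃ ω : Linf, IsInner ω ∧ θ' = θ * ω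

/-- evaluation of an `H²` function inside the disk, via its Taylor (Fourier) coefficients. -/
def evalDisk (f : L2) (α : ℂ) : ℂ := ∑' k : ℕ, fourierCoeff (f : Tc → ℂ) (k : ℤ) * α ^ k

/-- the model space `H_θ = H² ⊖ θH²`. -/
def ModelSpace (θ : Linf) : Submodule ℂ L2 := H2 ⊓ (Submodule.map (Mmul θ : L2 →ₗ[ℂ] L2) H2)ᗮ

/-- outer function: the closed span of its (analytic) polynomial multiples is all of `H²`. -/
def IsOuter (h : L2) : Prop :=
  (span ℂ (Set.range fun n : ℕ => mulL2 (fourierLp ⊤ (n : ℤ)) h)).topologicalClosure = H2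

/-- `h` coincides with an `H^∞` function which is invertible in `H^∞`. -/
def InvertibleHinf (h : L2) : Prop :=
  ∃ u v : Linf, toL2 u = h ∧ u ∈ Hinf ∧ v ∈ Hinf ∧ u * v = 1

/-- the set `E(φ)` appearing in Cowen's hyponormality criterion. -/
def Ecal (φ : Linf) : Set Linf :=
  {k | k ∈ Hinf ∧ ‖k‖ ≤ 1 ∧ φ - k * conjLinf φ ∈ Hinf}

theorem isClosed_modelSpace (θ : Linf) : IsClosed ((ModelSpace θ : Set L2)) := by
  rw [ModelSpace, Submodule.coe_inf]
  exact isClosed_H2.inter (Submodule.isClosed_orthogonal _)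

instance (θ : Linf) : CompleteSpace (ModelSpace θ) :=
  IsClosed.completeSpace_coe (hs := isClosed_modelSpace θ)

/-- the orthogonal projection of `L²` onto the model space `H_θ`, as an endomorphism of `L²`. -/
def Pmodel (θ : Linf) : L2 →L[ℂ] L2 :=
  (ModelSpace θ).subtypeL ∘L orthogonalProjection (ModelSpace θ)


-- ===== Auxiliary infrastructure =====
theorem coeFn_toL2 (φ : Linf) : (toL2 φ : Tc → ℂ) =ᵐ[muh] (φ : Tc → ℂ) :=
  MemLp.coeFn_toLp _

theorem fourierCoeff_congr_ae' {f g : Tc → ℂ} (h : f =ᵐ[muh] g) (n : ℤ) :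
    fourierCoeff f n = fourierCoeff g n := by
  unfold fourierCoeff
  exact integral_congr_ae (h.mono fun x hx => by simp only [hx])

theorem fc_conjfun (f : Tc → ℂ) (n : ℤ) :
    fourierCoeff (fun x => (starRingEnd ℂ) (f x)) n = (starRingEnd ℂ) (fourierCoeff f (-n)) := by
  unfold fourierCoeff
  rw [← integral_conj]
  apply integral_congr_ae
  apply Filter.Eventually.of_forall
  intro x
  simp only [smul_eq_mul, map_mul, neg_neg, ← fourier_neg]

theorem parseval (f g : L2) :
    (inner ℂ f g) =
      ∑' i : ℤ, (starRingEnd ℂ) (fourierCoeff (f : Tc → ℂ) i) * fourierCoeff (g : Tc → ℂ) i := by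
  rw [← HilbertBasis.tsum_inner_mul_inner fourierBasis f g]
  congr 1; ext i
  rw [← fourierBasis_repr, ← fourierBasis_repr, HilbertBasis.repr_apply_apply,
    HilbertBasis.repr_apply_apply, ← inner_conj_symm f (fourierBasis i)]

theorem fc_fourierLp (m n : ℤ) :
    fourierCoeff ((fourierLp 2 m : L2) : Tc → ℂ) n = if m = n then 1 else 0 := by
  classical
  rw [← fourierBasis_repr, ← coe_fourierBasis, HilbertBasis.repr_self, lp.single_apply]
  by_cases h : m = n
  · subst h; simp
  · rw [Pi.single_apply, if_neg (Ne.symm h), if_neg h]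

theorem mem_H2_iff {f : L2} :
    f ∈ H2 ↔ ∀ n : ℤ, n < 0 → fourierCoeff (f : Tc → ℂ) n = 0 := by
  constructor
  · intro hf n hn
    have hle : H2 ≤ (ℂ ∙ (fourierLp 2 n : L2))ᗮ := by
      apply Submodule.topologicalClosure_minimal
      · rw [Submodule.span_le]
        rintro x ⟨m, rfl⟩
        rw [SetLike.mem_coe, Submodule.mem_orthogonal_singleton_iff_inner_right]
        exact orthonormal_fourier.2 (by omega)
      · exact Submodule.isClosed_orthogonal _
    have h0 : (inner ℂ (fourierLp 2 n : L2) f) = 0 :=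
      Submodule.mem_orthogonal_singleton_iff_inner_right.mp (hle hf)
    rw [← fourierBasis_repr, fourierBasis.repr_apply_apply, coe_fourierBasis, h0]
  · intro h
    have hs := hasSum_fourier_series_L2 f
    have hmem : ∀ s : Finset ℤ,
        (∑ i ∈ s, fourierCoeff (f : Tc → ℂ) i • (fourierLp 2 i : L2)) ∈ H2 := by
      intro s
      apply Submodule.sum_mem
      intro i _
      rcases lt_or_ge i 0 with hi | hi
      · rw [h i hi, zero_smul]; exact zero_mem _
      · refine Submodule.smul_mem _ _ (Submodule.le_topologicalClosure _ (Submodule.subset_span ?_))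
        exact ⟨i.toNat, by simp [Int.toNat_of_nonneg hi]⟩
    exact isClosed_H2.mem_of_tendsto hs (Filter.Eventually.of_forall hmem)

theorem coeFn_mulL2 (φ : Linf) (g : L2) :
    (mulL2 φ g : Tc → ℂ) =ᵐ[muh] fun x => (φ : Tc → ℂ) x * (g : Tc → ℂ) x :=
  (memLp2_mul φ g).coeFn_toLp

theorem coeFn_conjL2 (f : L2) :
    (conjL2 f : Tc → ℂ) =ᵐ[muh] fun x => (starRingEnd ℂ) ((f : Tc → ℂ) x) := by
  refine (MemLp.coeFn_toLp _).trans (Filter.Eventually.of_forall fun x => rfl)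

theorem fc_mul_fourier (φ : Linf) (m n : ℤ) :
    fourierCoeff ((mulL2 φ (fourierLp 2 m) : L2) : Tc → ℂ) n
      = fourierCoeff (φ : Tc → ℂ) (n - m) := by
  have h : (mulL2 φ (fourierLp 2 m) : Tc → ℂ) =ᵐ[muh]
      fun x => (φ : Tc → ℂ) x * fourier m x := by
    filter_upwards [coeFn_mulL2 φ (fourierLp 2 m), coeFn_fourierLp 2 m] with x h1 h2
    rw [h1, h2]
  rw [fourierCoeff_congr_ae' h n]
  unfold fourierCoeff
  apply integral_congr_ae
  apply Filter.Eventually.of_forall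
  intro x
  simp only [smul_eq_mul]
  rw [show -(n - m) = m + -n by ring, fourier_add]
  ring

theorem fc_mulL2 (φ : Linf) (g : L2) (n : ℤ) :
    fourierCoeff ((mulL2 φ g : L2) : Tc → ℂ) n
      = ∑' k : ℤ, fourierCoeff (φ : Tc → ℂ) (n - k) * fourierCoeff (g : Tc → ℂ) k := by
  set h : L2 := conjL2 (mulL2 φ (fourierLp 2 (-n))) with hh
  have hfc : ∀ k : ℤ, fourierCoeff (h : Tc → ℂ) k
      = (starRingEnd ℂ) (fourierCoeff (φ : Tc → ℂ) (n - k)) := by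
    intro k
    rw [hh, fourierCoeff_congr_ae' (coeFn_conjL2 _) k, fc_conjfun, fc_mul_fourier]
    congr 1
    ring_nf
  have hinner : (inner ℂ h g) = fourierCoeff ((mulL2 φ g : L2) : Tc → ℂ) n := by
    rw [MeasureTheory.L2.inner_def, fourierCoeff_congr_ae' (coeFn_mulL2 φ g) n]
    unfold fourierCoeff
    apply integral_congr_ae
    filter_upwards [coeFn_conjL2 (mulL2 φ (fourierLp 2 (-n))),
      coeFn_mulL2 φ (fourierLp 2 (-n)), coeFn_fourierLp 2 (-n)] with x h1 h2 h3
    simp only [RCLike.inner_apply, hh, h1, h2, h3, map_mul, RingHom.id_apply,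
      Complex.conj_conj, smul_eq_mul]
    ring
  rw [← hinner, parseval]
  congr 1; ext k
  rw [hfc k, Complex.conj_conj]

theorem fc_Hinf_neg {φ : Linf} (hφ : φ ∈ Hinf) {n : ℤ} (hn : n < 0) :
    fourierCoeff (φ : Tc → ℂ) n = 0 := by
  rw [← fourierCoeff_congr_ae' (coeFn_toL2 φ) n]
  exact mem_H2_iff.mp hφ n hn

theorem mulL2_mem_H2 {φ : Linf} {g : L2} (hφ : φ ∈ Hinf) (hg : g ∈ H2) :
    mulL2 φ g ∈ H2 := by
  rw [mem_H2_iff]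
  intro n hn
  rw [fc_mulL2]
  have : ∀ k : ℤ, fourierCoeff (φ : Tc → ℂ) (n - k) * fourierCoeff (g : Tc → ℂ) k = 0 := by
    intro k
    rcases lt_or_ge k 0 with hk | hk
    · rw [mem_H2_iff.mp hg k hk, mul_zero]
    · rw [fc_Hinf_neg hφ (by omega), zero_mul]
  rw [tsum_congr this, tsum_zero]

theorem fc_mulL2_zero {φ : Linf} {g : L2} (hφ : φ ∈ Hinf) (hg : g ∈ H2) :
    fourierCoeff ((mulL2 φ g : L2) : Tc → ℂ) 0
      = fourierCoeff (φ : Tc → ℂ) 0 * fourierCoeff (g : Tc → ℂ) 0 := by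
  rw [fc_mulL2]
  rw [tsum_eq_single 0]
  · norm_num
  · intro k hk
    rcases lt_or_ge k 0 with hk' | hk'
    · rw [mem_H2_iff.mp hg k hk', mul_zero]
    · rw [fc_Hinf_neg hφ (by omega), zero_mul]

theorem toL2_mul (φ ψ : Linf) : toL2 (φ * ψ) = mulL2 φ (toL2 ψ) := by
  have hrfl : φ * ψ = (memLpTop_mul φ ψ).toLp _ := rfl
  apply MeasureTheory.Lp.ext
  filter_upwards [coeFn_toL2 (φ * ψ), coeFn_mulL2 φ (toL2 ψ), coeFn_toL2 ψ,
    (memLpTop_mul φ ψ).coeFn_toLp] with x h1 h2 h3 h4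
  rw [h1, h2, h3, hrfl, h4]
  rfl

theorem fc_sub (f g : L2) (n : ℤ) :
    fourierCoeff ((f - g : L2) : Tc → ℂ) n
      = fourierCoeff (f : Tc → ℂ) n - fourierCoeff (g : Tc → ℂ) n := by
  rw [← fourierBasis_repr, ← fourierBasis_repr, ← fourierBasis_repr, map_sub,
    lp.coeFn_sub, Pi.sub_apply]

theorem fc_smul (c : ℂ) (f : L2) (n : ℤ) :
    fourierCoeff ((c • f : L2) : Tc → ℂ) n = c * fourierCoeff (f : Tc → ℂ) n := by
  rw [← fourierBasis_repr, ← fourierBasis_repr, _root_.map_smul, lp.coeFn_smul, Pi.smul_apply,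
    smul_eq_mul]

theorem coeFn_one_Linf : ((1 : Linf) : Tc → ℂ) =ᵐ[muh] fun _ => (1 : ℂ) := by
  have h : (1 : Linf) = (memLp_top_const (1 : ℂ)).toLp _ := rfl
  rw [h]
  exact MemLp.coeFn_toLp _

theorem toL2_one : toL2 (1 : Linf) = (fourierLp 2 0 : L2) := by
  apply MeasureTheory.Lp.ext
  filter_upwards [coeFn_toL2 (1 : Linf), coeFn_one_Linf, coeFn_fourierLp 2 (0 : ℤ)]
    with x h1 h2 h3
  rw [h1, h2, h3, fourier_zero]

theorem fc_one (n : ℤ) :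
    fourierCoeff ((1 : Linf) : Tc → ℂ) n = if (0 : ℤ) = n then 1 else 0 := by
  rw [← fourierCoeff_congr_ae' (coeFn_toL2 (1 : Linf)) n, toL2_one, fc_fourierLp]

theorem sq_coeff_sum_ω {ω : Linf} (hω : IsInner ω) :
    ∑' i : ℤ, ‖fourierCoeff ((toL2 ω : L2) : Tc → ℂ) i‖ ^ 2 = 1 := by
  rw [tsum_sq_fourierCoeff]
  have h : ∫ t : Tc, ‖(toL2 ω : Tc → ℂ) t‖ ^ 2 ∂muh = ∫ _t : Tc, (1 : ℝ) ∂muh := by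
    apply integral_congr_ae
    filter_upwards [coeFn_toL2 ω, hω.2] with x h1 h2
    rw [h1, h2]; norm_num
  rw [h, integral_const, smul_eq_mul, probReal_univ, one_mul]

theorem fc_conjL2 (f : L2) (n : ℤ) :
    fourierCoeff ((conjL2 f : L2) : Tc → ℂ) n
      = (starRingEnd ℂ) (fourierCoeff (f : Tc → ℂ) (-n)) := by
  rw [fourierCoeff_congr_ae' (coeFn_conjL2 f) n, fc_conjfun]

theorem toL2_sub_smul (ω : Linf) (a : ℂ) :
    toL2 (ω - a • 1) = toL2 ω - a • toL2 (1 : Linf) := by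
  apply MeasureTheory.Lp.ext
  filter_upwards [coeFn_toL2 (ω - a • 1), MeasureTheory.Lp.coeFn_sub ω (a • (1 : Linf)),
    MeasureTheory.Lp.coeFn_smul a (1 : Linf), coeFn_one_Linf,
    MeasureTheory.Lp.coeFn_sub (toL2 ω) (a • toL2 (1 : Linf)),
    MeasureTheory.Lp.coeFn_smul a (toL2 (1 : Linf)), coeFn_toL2 ω, coeFn_toL2 (1 : Linf)]
    with x h1 h2 h3 h4 h5 h6 h7 h8
  rw [h1, h5, h2]
  simp only [Pi.sub_apply, Pi.smul_apply, h3, h4, h6, h7, h8, smul_eq_mul, mul_one]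

theorem fc_theta_zero {θ₀ ω : Linf} (hω : IsInner ω) (hsq : ω * ω = θ₀) :
    fourierCoeff (θ₀ : Tc → ℂ) 0
      = fourierCoeff (ω : Tc → ℂ) 0 * fourierCoeff (ω : Tc → ℂ) 0 := by
  have h1 : fourierCoeff (θ₀ : Tc → ℂ) 0 = fourierCoeff ((toL2 θ₀ : L2) : Tc → ℂ) 0 :=
    (fourierCoeff_congr_ae' (coeFn_toL2 θ₀) 0).symm
  rw [h1, ← hsq, toL2_mul, fc_mulL2_zero hω.1 hω.1,
    fourierCoeff_congr_ae' (coeFn_toL2 ω) 0]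

theorem norm_fc_omega_lt_one {θ₀ ω : Linf} (hω : IsInner ω) (hsq : ω * ω = θ₀)
    (hnc : ¬ IsConstLinf θ₀) : ‖fourierCoeff (ω : Tc → ℂ) 0‖ < 1 := by
  set c := fourierCoeff (ω : Tc → ℂ) 0 with hc
  have hc0 : fourierCoeff ((toL2 ω : L2) : Tc → ℂ) 0 = c :=
    fourierCoeff_congr_ae' (coeFn_toL2 ω) 0
  have hsum := sq_coeff_sum_ω hω
  have hsummable : Summable fun i : ℤ => ‖fourierCoeff ((toL2 ω : L2) : Tc → ℂ) i‖ ^ 2 := by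
    by_contra hns
    rw [tsum_eq_zero_of_not_summable hns] at hsum
    norm_num at hsum
  have hle : ‖c‖ ^ 2 ≤ 1 := by
    rw [← hc0, ← hsum]
    exact Summable.le_tsum hsummable 0 fun i _ => by positivity
  have hle1 : ‖c‖ ≤ 1 := by nlinarith [norm_nonneg c]
  rcases lt_or_eq_of_le hle1 with h | h
  · exact h
  -- ‖c‖ = 1 forces ω constant, contradiction
  exfalso
  have hother : ∀ i : ℤ, i ≠ 0 → fourierCoeff ((toL2 ω : L2) : Tc → ℂ) i = 0 := by
    intro i hi
    have hpair : ‖fourierCoeff ((toL2 ω : L2) : Tc → ℂ) 0‖ ^ 2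
        + ‖fourierCoeff ((toL2 ω : L2) : Tc → ℂ) i‖ ^ 2 ≤ 1 := by
      rw [← hsum]
      have := Summable.sum_le_tsum ({0, i} : Finset ℤ) (fun j _ => by positivity) hsummable
      rwa [Finset.sum_pair (Ne.symm hi)] at this
    rw [hc0, h] at hpair
    have : ‖fourierCoeff ((toL2 ω : L2) : Tc → ℂ) i‖ ^ 2 ≤ 0 := by nlinarith
    have hnn := sq_nonneg ‖fourierCoeff ((toL2 ω : L2) : Tc → ℂ) i‖
    have : ‖fourierCoeff ((toL2 ω : L2) : Tc → ℂ) i‖ = 0 := by nlinarith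
    exact norm_eq_zero.mp this
  have hrepr : toL2 ω = c • (fourierLp 2 0 : L2) := by
    apply fourierBasis.repr.injective
    apply lp.ext
    funext i
    rw [fourierBasis_repr, _root_.map_smul, lp.coeFn_smul, Pi.smul_apply, ← coe_fourierBasis,
      HilbertBasis.repr_self, smul_eq_mul]
    classical
    rw [lp.single_apply]
    by_cases hi : i = 0
    · subst hi; simp [hc0]
    · rw [hother i hi, Pi.single_apply, if_neg hi, mul_zero]
  have hconst : (ω : Tc → ℂ) =ᵐ[muh] fun _ => c := by
    have h1 := coeFn_toL2 ω
    rw [hrepr] at h1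
    filter_upwards [h1, MeasureTheory.Lp.coeFn_smul c (fourierLp 2 (0 : ℤ) : L2),
      coeFn_fourierLp 2 (0 : ℤ)] with x h1x h2x h3x
    rw [← h1x, h2x, Pi.smul_apply, h3x, fourier_zero, smul_eq_mul, mul_one]
  apply hnc
  refine ⟨c * c, ?_⟩
  rw [← hsq]
  apply MeasureTheory.Lp.ext
  have hmul : ((ω * ω : Linf) : Tc → ℂ) =ᵐ[muh] fun x => (ω : Tc → ℂ) x * (ω : Tc → ℂ) x := by
    have hr : ω * ω = (memLpTop_mul ω ω).toLp _ := rfl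
    rw [hr]
    exact (MemLp.coeFn_toLp _).mono fun x hx => by rw [hx]; rfl
  filter_upwards [hmul, hconst, MeasureTheory.Lp.coeFn_smul (c * c) (1 : Linf), coeFn_one_Linf]
    with x h1 h2 h3 h4
  rw [h1, h2, h3]
  simp only [Pi.smul_apply, h4, smul_eq_mul, mul_one]

theorem fourierLp_mem_H2 {n : ℤ} (hn : 0 ≤ n) : (fourierLp 2 n : L2) ∈ H2 :=
  Submodule.le_topologicalClosure _
    (Submodule.subset_span ⟨n.toNat, by simp [Int.toNat_of_nonneg hn]⟩)

/-- powers in `L^∞` (which only carries a `Mul` instance here) -/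
def powLinf (ω : Linf) : ℕ → Linf
  | 0 => 1
  | k + 1 => ω * powLinf ω k

theorem powLinf_coeFn (ω : Linf) (k : ℕ) :
    ((powLinf ω k : Linf) : Tc → ℂ) =ᵐ[muh] fun x => ((ω : Tc → ℂ) x) ^ k := by
  induction k with
  | zero => simpa [powLinf] using coeFn_one_Linf
  | succ k ih =>
      have hr : powLinf ω (k + 1) = (memLpTop_mul ω (powLinf ω k)).toLp _ := rfl
      rw [hr]
      filter_upwards [MemLp.coeFn_toLp (memLpTop_mul ω (powLinf ω k)), ih] with x h1 h2
      rw [h1, Pi.smul_apply', smul_eq_mul, h2, pow_succ]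
      ring

theorem powLinf_mem_Hinf {ω : Linf} (hω : IsInner ω) (k : ℕ) : powLinf ω k ∈ Hinf := by
  induction k with
  | zero =>
      show toL2 (1 : Linf) ∈ H2
      rw [toL2_one]
      exact fourierLp_mem_H2 le_rfl
  | succ k ih =>
      show toL2 (ω * powLinf ω k) ∈ H2
      rw [toL2_mul]
      exact mulL2_mem_H2 hω.1 ih

theorem exists_inv_Hinf (ω : Linf) (hω : IsInner ω) {α : ℂ} (hα0 : α ≠ 0) (hα1 : ‖α‖ < 1) :
    ∃ w : Linf, w ∈ Hinf ∧ (ω - α⁻¹ • 1) * w = 1 := by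
  have hαpos : 0 < ‖α‖ := norm_pos_iff.mpr hα0
  have hinv1 : 1 < ‖α‖⁻¹ := by
    have h1 : ‖α‖ * ‖α‖⁻¹ = 1 := mul_inv_cancel₀ (ne_of_gt hαpos)
    nlinarith [inv_nonneg.mpr (le_of_lt hαpos)]
  have hC : (0 : ℝ) < ‖α‖⁻¹ - 1 := by linarith
  set F : Tc → ℂ := fun x => ((ω : Tc → ℂ) x - α⁻¹)⁻¹ with hF
  have hFm : AEStronglyMeasurable F muh :=
    (((MeasureTheory.Lp.aestronglyMeasurable ω).aemeasurable.sub
      aemeasurable_const).inv).aestronglyMeasurable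
  have hlow : ∀ᵐ x ∂muh, ‖α‖⁻¹ - 1 ≤ ‖(ω : Tc → ℂ) x - α⁻¹‖ := by
    filter_upwards [hω.2] with x hx
    calc ‖α‖⁻¹ - 1 = ‖α⁻¹‖ - ‖(ω : Tc → ℂ) x‖ := by rw [norm_inv, hx]
      _ ≤ ‖α⁻¹ - (ω : Tc → ℂ) x‖ := norm_sub_norm_le _ _
      _ = ‖(ω : Tc → ℂ) x - α⁻¹‖ := norm_sub_rev _ _
  have hFmem : MemLp F ⊤ muh := by
    apply memLp_top_of_bound hFm ((‖α‖⁻¹ - 1)⁻¹)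
    filter_upwards [hlow] with x hx
    rw [hF, norm_inv]
    exact inv_anti₀ hC hx
  refine ⟨hFmem.toLp F, ?_, ?_⟩
  · -- the inverse is in H^∞, via the geometric series
    show toL2 (hFmem.toLp F) ∈ H2
    set SN : ℕ → L2 := fun N => ∑ k ∈ Finset.range N, (-α * α ^ k) • toL2 (powLinf ω k)
      with hSN
    have hSNH : ∀ N, SN N ∈ H2 := by
      intro N
      exact Submodule.sum_mem _ fun k _ => Submodule.smul_mem _ _ (powLinf_mem_Hinf hω k)
    have hSNfun : ∀ N, ((SN N : L2) : Tc → ℂ) =ᵐ[muh]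
        fun x => ∑ k ∈ Finset.range N, (-α * α ^ k) * ((ω : Tc → ℂ) x) ^ k := by
      intro N
      induction N with
      | zero => simpa [hSN, Pi.zero_def] using MeasureTheory.Lp.coeFn_zero (E := ℂ) (p := 2) (μ := muh)
      | succ N ih =>
          have h1 : SN (N + 1) = SN N + (-α * α ^ N) • toL2 (powLinf ω N) := by
            rw [hSN]; exact Finset.sum_range_succ _ _
          rw [h1]
          filter_upwards [MeasureTheory.Lp.coeFn_add (SN N) ((-α * α ^ N) • toL2 (powLinf ω N)),
            MeasureTheory.Lp.coeFn_smul (-α * α ^ N) (toL2 (powLinf ω N)),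
            coeFn_toL2 (powLinf ω N), powLinf_coeFn ω N, ih] with x h2 h3 h4 h5 h6
          rw [h2, Pi.add_apply, h6, Finset.sum_range_succ, h3, Pi.smul_apply, smul_eq_mul, h4, h5]
    have hbound : ∀ N, ‖toL2 (hFmem.toLp F) - SN N‖ ≤ ‖α‖ ^ (N + 1) * (1 - ‖α‖)⁻¹ := by
      intro N
      have hae : ∀ᵐ x ∂muh, ‖((toL2 (hFmem.toLp F) - SN N : L2) : Tc → ℂ) x‖
          ≤ ‖α‖ ^ (N + 1) * (1 - ‖α‖)⁻¹ := by
        filter_upwards [MeasureTheory.Lp.coeFn_sub (toL2 (hFmem.toLp F)) (SN N),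
          coeFn_toL2 (hFmem.toLp F), hFmem.coeFn_toLp, hSNfun N, hω.2] with x h1 h2 h3 h4 h5
        rw [h1, Pi.sub_apply, h2, h3, h4]
        set z := (ω : Tc → ℂ) x with hz
        set r := α * z with hr
        have hrn : ‖r‖ = ‖α‖ := by rw [hr, norm_mul, h5, mul_one]
        have hr1 : r ≠ 1 := by
          intro h; rw [h, norm_one] at hrn; exact absurd hrn.symm (ne_of_lt hα1)
        have h1r : (1 : ℂ) - r ≠ 0 := sub_ne_zero.mpr (Ne.symm hr1)
        have hFx : F x = -α * ((1 : ℂ) - r)⁻¹ := by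
          have hz' : z - α⁻¹ = -α⁻¹ * (1 - r) := by
            rw [hr]
            linear_combination (-z) * inv_mul_cancel₀ hα0
          rw [hF]
          simp only
          rw [hz', mul_inv, inv_neg, inv_inv]
        have hsum' : ∑ k ∈ Finset.range N, (-α * α ^ k) * z ^ k
            = -α * ((r ^ N - 1) / (r - 1)) := by
          rw [← geom_sum_eq hr1 N, Finset.mul_sum]
          congr 1; ext k
          rw [hr, mul_pow]; ring
        have hkey : F x - ∑ k ∈ Finset.range N, (-α * α ^ k) * z ^ k
            = -α * r ^ N * ((1 : ℂ) - r)⁻¹ := by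
          rw [hFx, hsum']
          have hr1' : r - 1 ≠ 0 := sub_ne_zero.mpr hr1
          field_simp
          ring
        rw [hkey, norm_mul, norm_mul, norm_neg, norm_pow, hrn, norm_inv, pow_succ]
        have h1rge : 1 - ‖α‖ ≤ ‖(1 : ℂ) - r‖ := by
          calc 1 - ‖α‖ = ‖(1 : ℂ)‖ - ‖r‖ := by rw [norm_one, hrn]
            _ ≤ ‖(1 : ℂ) - r‖ := norm_sub_norm_le _ _
        have h1αpos : (0 : ℝ) < 1 - ‖α‖ := by linarith
        have := inv_anti₀ h1αpos h1rge
        have hα' : (0 : ℝ) ≤ ‖α‖ ^ N * ‖α‖ := by positivity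
        calc ‖α‖ * ‖α‖ ^ N * ‖(1 : ℂ) - r‖⁻¹ ≤ ‖α‖ * ‖α‖ ^ N * (1 - ‖α‖)⁻¹ := by
              apply mul_le_mul_of_nonneg_left this (by positivity)
          _ = ‖α‖ ^ N * ‖α‖ * (1 - ‖α‖)⁻¹ := by ring
      have h1αpos : (0 : ℝ) < 1 - ‖α‖ := by linarith
      have hb := MeasureTheory.Lp.norm_le_of_ae_bound (f := toL2 (hFmem.toLp F) - SN N)
        (by positivity) hae
      rw [measureUnivNNReal, measure_univ] at hb
      simpa using hb
    have htend0 : Filter.Tendsto (fun N : ℕ => ‖α‖ ^ (N + 1) * (1 - ‖α‖)⁻¹)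
        Filter.atTop (nhds 0) := by
      have h1 := tendsto_pow_atTop_nhds_zero_of_lt_one (norm_nonneg α) hα1
      have h2 := (h1.comp (Filter.tendsto_add_atTop_nat 1)).mul_const (1 - ‖α‖)⁻¹
      simpa using h2
    have htend : Filter.Tendsto SN Filter.atTop (nhds (toL2 (hFmem.toLp F))) := by
      rw [tendsto_iff_norm_sub_tendsto_zero]
      apply squeeze_zero (fun N => norm_nonneg _) (fun N => ?_) htend0
      rw [norm_sub_rev]
      exact hbound N
    exact isClosed_H2.mem_of_tendsto htend (Filter.Eventually.of_forall hSNH)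
  · -- (ω - α⁻¹) * F = 1
    have hrfl : (ω - α⁻¹ • 1) * hFmem.toLp F
        = (memLpTop_mul (ω - α⁻¹ • 1) (hFmem.toLp F)).toLp _ := rfl
    apply MeasureTheory.Lp.ext
    rw [hrfl]
    filter_upwards [MemLp.coeFn_toLp (memLpTop_mul (ω - α⁻¹ • 1) (hFmem.toLp F)),
      MeasureTheory.Lp.coeFn_sub ω ((α⁻¹ : ℂ) • (1 : Linf)),
      MeasureTheory.Lp.coeFn_smul (α⁻¹ : ℂ) (1 : Linf), coeFn_one_Linf,
      hFmem.coeFn_toLp, hlow, coeFn_one_Linf] with x h1 h2 h3 h4 h5 h6 h7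
    have hne : (ω : Tc → ℂ) x - α⁻¹ ≠ 0 := by
      intro h
      rw [h, norm_zero] at h6
      linarith
    rw [h7, h1, Pi.smul_apply', smul_eq_mul, h2, Pi.sub_apply, h3, Pi.smul_apply, h4,
      smul_eq_mul, mul_one, h5]
    exact mul_inv_cancel₀ hne

theorem Mmul_apply (φ : Linf) (g : L2) : (Mmul φ) g = mulL2 φ g := rfl

theorem fourierLpTop_mem_Hinf (n : ℕ) : (fourierLp ⊤ (n : ℤ) : Linf) ∈ Hinf := by
  show toL2 (fourierLp ⊤ (n : ℤ)) ∈ H2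
  have h : toL2 (fourierLp ⊤ (n : ℤ)) = (fourierLp 2 (n : ℤ) : L2) := by
    apply MeasureTheory.Lp.ext
    filter_upwards [coeFn_toL2 (fourierLp ⊤ (n : ℤ)), coeFn_fourierLp ⊤ (n : ℤ),
      coeFn_fourierLp 2 (n : ℤ)] with x h1 h2 h3
    rw [h1, h2, h3]
  rw [h]
  exact fourierLp_mem_H2 (Int.ofNat_nonneg n)

theorem coeFn_mul_Linf (u w : Linf) :
    ((u * w : Linf) : Tc → ℂ) =ᵐ[muh] fun x => (u : Tc → ℂ) x * (w : Tc → ℂ) x := by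
  have hr : u * w = (memLpTop_mul u w).toLp _ := rfl
  rw [hr]
  exact (MemLp.coeFn_toLp _).mono fun x hx => by rw [hx]; rfl

theorem isOuter_of_invertible {u w : Linf} (hu : u ∈ Hinf) (hw : w ∈ Hinf)
    (huw : u * w = 1) : IsOuter (toL2 u) := by
  unfold IsOuter
  apply le_antisymm
  · have hle : span ℂ (Set.range fun n : ℕ => mulL2 (fourierLp ⊤ (n : ℤ)) (toL2 u)) ≤ H2 := by
      rw [Submodule.span_le]
      rintro x ⟨n, rfl⟩
      exact mulL2_mem_H2 (fourierLpTop_mem_Hinf n) hu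
    exact Submodule.topologicalClosure_minimal _ hle isClosed_H2
  · intro f hf
    set g := mulL2 w f with hg
    have hgH : g ∈ H2 := mulL2_mem_H2 hw hf
    have haeuw : ∀ᵐ x ∂muh, (u : Tc → ℂ) x * (w : Tc → ℂ) x = 1 := by
      have h1 := coeFn_mul_Linf u w
      rw [huw] at h1
      filter_upwards [h1, coeFn_one_Linf] with x h1x h2x
      rw [← h1x, h2x]
    have hfug : mulL2 u g = f := by
      apply MeasureTheory.Lp.ext
      filter_upwards [coeFn_mulL2 u g, coeFn_mulL2 w f, haeuw] with x h1 h2 h3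
      rw [h1, h2, ← mul_assoc, h3, one_mul]
    have hsum : HasSum (fun i : ℤ =>
        fourierCoeff ((g : L2) : Tc → ℂ) i • mulL2 u (fourierLp 2 i)) f := by
      have h1 := (Mmul u).hasSum (hasSum_fourier_series_L2 g)
      simp only [_root_.map_smul, Mmul_apply] at h1
      rw [hfug] at h1
      exact h1
    have hterm : ∀ s : Finset ℤ,
        (∑ i ∈ s, fourierCoeff ((g : L2) : Tc → ℂ) i • mulL2 u (fourierLp 2 i)) ∈
          (span ℂ (Set.range fun n : ℕ => mulL2 (fourierLp ⊤ (n : ℤ)) (toL2 u))) := by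
      intro s
      apply Submodule.sum_mem
      intro i _
      rcases lt_or_ge i 0 with hi | hi
      · rw [mem_H2_iff.mp hgH i hi, zero_smul]; exact zero_mem _
      · apply Submodule.smul_mem
        apply Submodule.subset_span
        refine ⟨i.toNat, ?_⟩
        apply MeasureTheory.Lp.ext
        filter_upwards [coeFn_mulL2 (fourierLp ⊤ ((i.toNat : ℕ) : ℤ)) (toL2 u),
          coeFn_mulL2 u (fourierLp 2 i), coeFn_fourierLp ⊤ ((i.toNat : ℕ) : ℤ),
          coeFn_fourierLp 2 i, coeFn_toL2 u] with x h1 h2 h3x h4 h5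
        rw [h1, h2, h3x, h4, h5, Int.toNat_of_nonneg hi]
        exact mul_comm _ _
    exact (Submodule.isClosed_topologicalClosure _).mem_of_tendsto hsum
      (Filter.Eventually.of_forall fun s =>
        Submodule.le_topologicalClosure _ (hterm s))

theorem shift_mem_modelSpace {θ₀ ω : Linf} (hθ : IsInner θ₀) (hω : IsInner ω)
    (hsq : ω * ω = θ₀) {α : ℂ}
    (hαc : fourierCoeff (ω : Tc → ℂ) 0 = (starRingEnd ℂ) α) :
    (toL2 ω - α⁻¹ • toL2 (1 : Linf)) ∈ ModelSpace θ₀ := by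
  set v : L2 := toL2 ω - α⁻¹ • toL2 (1 : Linf) with hv
  have hfcv : ∀ n : ℤ, n < 0 → fourierCoeff ((v : L2) : Tc → ℂ) n = 0 := by
    intro n hn
    rw [hv, fc_sub, fc_smul, fourierCoeff_congr_ae' (coeFn_toL2 ω) n, toL2_one, fc_fourierLp,
      if_neg (by omega), mul_zero, sub_zero]
    exact fc_Hinf_neg hω.1 hn
  have hvH2 : v ∈ H2 := mem_H2_iff.mpr hfcv
  rw [ModelSpace, Submodule.mem_inf]
  refine ⟨hvH2, ?_⟩
  rw [Submodule.mem_orthogonal]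
  rintro y hy
  rcases Submodule.mem_map.mp hy with ⟨g, hg, rfl⟩
  rw [ContinuousLinearMap.coe_coe, Mmul_apply]
  set W : L2 := conjL2 (toL2 ω) - α⁻¹ • conjL2 (toL2 θ₀) with hW
  have hθfun : (θ₀ : Tc → ℂ) =ᵐ[muh] fun x => (ω : Tc → ℂ) x * (ω : Tc → ℂ) x := by
    rw [← hsq]
    exact coeFn_mul_Linf ω ω
  have step1 : (inner ℂ (mulL2 θ₀ g) v) = inner ℂ g W := by
    rw [MeasureTheory.L2.inner_def, MeasureTheory.L2.inner_def]
    apply integral_congr_ae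
    filter_upwards [coeFn_mulL2 θ₀ g,
      MeasureTheory.Lp.coeFn_sub (toL2 ω) (α⁻¹ • toL2 (1 : Linf)),
      MeasureTheory.Lp.coeFn_smul (α⁻¹ : ℂ) (toL2 (1 : Linf)),
      coeFn_toL2 ω, coeFn_toL2 (1 : Linf), coeFn_one_Linf,
      MeasureTheory.Lp.coeFn_sub (conjL2 (toL2 ω)) (α⁻¹ • conjL2 (toL2 θ₀)),
      MeasureTheory.Lp.coeFn_smul (α⁻¹ : ℂ) (conjL2 (toL2 θ₀)),
      coeFn_conjL2 (toL2 ω), coeFn_conjL2 (toL2 θ₀),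
      coeFn_toL2 θ₀, hθfun, hω.2]
      with x h1 h2 h3 h4 h5 h6 h7 h8 h9 h10 h11 h12 h13
    simp only [RCLike.inner_apply]
    rw [hv, hW, h1, h2, Pi.sub_apply, h3, Pi.smul_apply, smul_eq_mul, h4, h5, h6,
      h7, Pi.sub_apply, h8, Pi.smul_apply, smul_eq_mul, h9, h10, h4, h11, h12]
    have hk : (starRingEnd ℂ) ((ω : Tc → ℂ) x) * (ω : Tc → ℂ) x = 1 := by
      rw [mul_comm, Complex.mul_conj]
      norm_cast
      rw [← Complex.sq_norm, h13, one_pow]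
    simp only [map_mul, mul_one]
    linear_combination ((starRingEnd ℂ) ((g : Tc → ℂ) x)
      * (starRingEnd ℂ) ((ω : Tc → ℂ) x)) * hk
  have step2 : (inner ℂ g W) = 0 := by
    rw [parseval]
    have hterm : ∀ k : ℤ,
        (starRingEnd ℂ) (fourierCoeff ((g : L2) : Tc → ℂ) k)
          * fourierCoeff ((W : L2) : Tc → ℂ) k = 0 := by
      intro k
      rcases lt_or_ge k 0 with hk | hk
      · rw [mem_H2_iff.mp hg k hk, map_zero, zero_mul]
      · have hWk : fourierCoeff ((W : L2) : Tc → ℂ) k = 0 := by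
          rw [hW, fc_sub, fc_smul, fc_conjL2, fc_conjL2]
          rcases lt_or_eq_of_le hk with hk' | hk'
          · rw [mem_H2_iff.mp hω.1 (-k) (by omega), mem_H2_iff.mp hθ.1 (-k) (by omega)]
            simp
          · subst hk'
            rw [neg_zero, fourierCoeff_congr_ae' (coeFn_toL2 ω) 0,
              fourierCoeff_congr_ae' (coeFn_toL2 θ₀) 0, fc_theta_zero hω hsq, hαc]
            simp only [map_mul, Complex.conj_conj]
            by_cases hα0 : α = 0
            · subst hα0; simp
            · field_simp
              ring
        rw [hWk, mul_zero]
    rw [tsum_congr hterm, tsum_zero]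
  rw [step1, step2]

/-- if `θ₀` is a nonconstant singular inner function (inner, with no zeros in the
disk), `ω` is the singular inner function with `ω² = θ₀`, and `α = conj (ω(0))`, then
`0 < |α| < 1`, and `ω − 1/α` belongs to the model space `H² ⊖ θ₀H²`, is outer, and is
invertible in `H^∞`. -/
theorem singular_inner_sqrt_shift_outer
    (θ₀ ω : Linf) (hθ : IsInner θ₀) (hnc : ¬ IsConstLinf θ₀) (hω : IsInner ω)
    (hsq : ω * ω = θ₀)
    (hnozero : ∀ z : ℂ, ‖z‖ < 1 → evalDisk (toL2 ω) z ≠ 0)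
    (α : ℂ) (hα : α = (starRingEnd ℂ) (evalDisk (toL2 ω) 0)) :
    0 < ‖α‖ ∧ ‖α‖ < 1 ∧
      (toL2 ω - α⁻¹ • toL2 (1 : Linf)) ∈ ModelSpace θ₀ ∧
      IsOuter (toL2 ω - α⁻¹ • toL2 (1 : Linf)) ∧
      InvertibleHinf (toL2 ω - α⁻¹ • toL2 (1 : Linf)) := by
  have heval : evalDisk (toL2 ω) 0 = fourierCoeff ((toL2 ω : L2) : Tc → ℂ) 0 := by
    unfold evalDisk
    rw [tsum_eq_single 0]
    · simp
    · intro k hk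
      rw [zero_pow hk, mul_zero]
  have hc0 : fourierCoeff ((toL2 ω : L2) : Tc → ℂ) 0 = fourierCoeff (ω : Tc → ℂ) 0 :=
    fourierCoeff_congr_ae' (coeFn_toL2 ω) 0
  have hαc : fourierCoeff (ω : Tc → ℂ) 0 = (starRingEnd ℂ) α := by
    rw [hα, heval, hc0, Complex.conj_conj]
  have hα0 : α ≠ 0 := by
    intro h
    exact hnozero 0 (by norm_num) (by rw [heval, hc0, hαc, h, map_zero])
  have h1 : 0 < ‖α‖ := norm_pos_iff.mpr hα0
  have hlt : ‖α‖ < 1 := by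
    have h2 := norm_fc_omega_lt_one hω hsq hnc
    rw [hαc] at h2
    rwa [RCLike.norm_conj] at h2
  obtain ⟨w, hwH, huw⟩ := exists_inv_Hinf ω hω hα0 hlt
  have htoL2u : toL2 (ω - α⁻¹ • 1) = toL2 ω - α⁻¹ • toL2 (1 : Linf) := toL2_sub_smul ω α⁻¹
  have huHinf : (ω - α⁻¹ • 1) ∈ Hinf := by
    show toL2 _ ∈ H2
    rw [htoL2u, mem_H2_iff]
    intro n hn
    rw [fc_sub, fc_smul, fourierCoeff_congr_ae' (coeFn_toL2 ω) n, toL2_one, fc_fourierLp,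
      if_neg (by omega), mul_zero, sub_zero]
    exact fc_Hinf_neg hω.1 hn
  refine ⟨h1, hlt, shift_mem_modelSpace hθ hω hsq hαc, ?_, ?_⟩
  · have h3 := isOuter_of_invertible huHinf hwH huw
    rwa [htoL2u] at h3
  · exact ⟨ω - α⁻¹ • 1, w, htoL2u, huHinf, hwH, huw⟩
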